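/- Let N be an odd positive integer, let K be an integer with 1 ≤ K ≤ N/4, and let 2/3 < β ≤ 1 and C > 0. Let μ : ℤ/Nℤ → ℂ satisfy |μ̂(k)| ≤ C·(min(k, N−k)·N)^{−β/2} for all 1 ≤ k ≤ N−1. Define μ₁ by μ̂₁(n) = (1 − n/(K+1))·μ̂(n) for 0 ≤ n ≤ K and μ̂₁(n) = 0 for K < n ≤ N−1, and let μ₂ = μ − μ₁. Then there is a constant C′ depending only on C and β (not on N or K) such that |Λ₃(μ₁, μ₂, μ₁)| ≤ C′·N^{−3β/2} and |Λ₃(μ₁, μ₂, μ₂)| ≤ C′·N^{−3β/2}. -/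

import Mathlib

open Complex Real Finset

/-- Discrete Fourier coefficient of `f : ℤ/Nℤ → ℂ`, extended `N`-periodically in `k`. -/
noncomputable def zmodFourier (N : ℕ) (f : ZMod N → ℂ) (k : ℤ) : ℂ :=
  (N : ℂ)⁻¹ * ∑ n ∈ Finset.range N,
    f n * Complex.exp (-(2 * Real.pi * Complex.I * k * n) / N)

/-- The trilinear form `Λ₃(f,g,h) = (1/N²) ∑_{x,r} f(x) g(x+r) h(x+2r)` on `ℤ/Nℤ`. -/
noncomputable def lambda3 (N : ℕ) (f g h : ZMod N → ℂ) : ℂ :=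
  ((N : ℂ) ^ 2)⁻¹ * ∑ x ∈ Finset.range N, ∑ r ∈ Finset.range N,
    f x * g ((x : ZMod N) + r) * h ((x : ZMod N) + 2 * r)

section Aux

variable {N : ℕ} [NeZero N]

lemma sum_range_zmod {M : Type*} [AddCommMonoid M] (F : ZMod N → M) :
    ∑ n ∈ Finset.range N, F (n : ZMod N) = ∑ x : ZMod N, F x := by
  refine Finset.sum_nbij' (i := fun n => (n : ZMod N)) (j := fun x => x.val)
    (fun n _ => Finset.mem_univ _) (fun x _ => Finset.mem_range.2 x.val_lt)
    (fun n hn => ZMod.val_natCast_of_lt (Finset.mem_range.1 hn))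
    (fun x _ => ZMod.natCast_zmod_val x) (fun n _ => rfl)

lemma char_orth (t : ZMod N) :
    ∑ k : ZMod N, ZMod.stdAddChar (t * k) = if t = 0 then (N : ℂ) else 0 := by
  split_ifs with h
  · simp only [h, zero_mul, AddChar.map_zero_eq_one, sum_const, card_univ, ZMod.card,
      nsmul_eq_mul, mul_one]
  · exact AddChar.sum_eq_zero_of_ne_one (ZMod.isPrimitive_stdAddChar N h)

lemma zmodFourier_eq (f : ZMod N → ℂ) (k : ℤ) :
    zmodFourier N f k = (N : ℂ)⁻¹ * ZMod.dft f (k : ZMod N) := by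
  rw [zmodFourier, ZMod.dft_apply]
  congr 1
  rw [← sum_range_zmod (fun x => ZMod.stdAddChar (-(x * (k : ZMod N))) • f x)]
  refine Finset.sum_congr rfl fun n _ => ?_
  have h1 : -((n : ZMod N) * (k : ZMod N)) = ((-(k * n) : ℤ) : ZMod N) := by push_cast; ring
  rw [smul_eq_mul, h1, ZMod.stdAddChar_coe, mul_comm]
  congr 1
  push_cast
  ring

lemma lambda3_spectral (f g h : ZMod N → ℂ) :
    lambda3 N f g h = ∑ k : ZMod N,
      ((N : ℂ)⁻¹ * ZMod.dft f k) * ((N : ℂ)⁻¹ * ZMod.dft g (-(2 * k))) *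
        ((N : ℂ)⁻¹ * ZMod.dft h k) := by
  have hN : (N : ℂ) ≠ 0 := Nat.cast_ne_zero.2 (NeZero.ne N)
  have key : ∑ k : ZMod N, ZMod.dft f k * ZMod.dft g (-(2 * k)) * ZMod.dft h k
      = (N : ℂ) * ∑ x : ZMod N, ∑ r : ZMod N, f x * g (x + r) * h (x + 2 * r) := by
    have hterm : ∀ a b c k : ZMod N,
        ZMod.stdAddChar (-(a * k)) * f a * (ZMod.stdAddChar (-(b * -(2 * k))) * g b) *
          (ZMod.stdAddChar (-(c * k)) * h c)
        = f a * g b * h c * ZMod.stdAddChar ((2 * b - a - c) * k) := by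
      intro a b c k
      have hc : ZMod.stdAddChar (-(a * k)) * ZMod.stdAddChar (-(b * -(2 * k))) *
          ZMod.stdAddChar (-(c * k)) = ZMod.stdAddChar ((2 * b - a - c) * k) := by
        rw [← AddChar.map_add_eq_mul, ← AddChar.map_add_eq_mul]
        congr 1
        ring
      calc ZMod.stdAddChar (-(a * k)) * f a * (ZMod.stdAddChar (-(b * -(2 * k))) * g b) *
          (ZMod.stdAddChar (-(c * k)) * h c)
          = ZMod.stdAddChar (-(a * k)) * ZMod.stdAddChar (-(b * -(2 * k))) *
            ZMod.stdAddChar (-(c * k)) * (f a * g b * h c) := by ring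
        _ = f a * g b * h c * ZMod.stdAddChar ((2 * b - a - c) * k) := by rw [hc]; ring
    have expand : ∀ k : ZMod N,
        ZMod.dft f k * ZMod.dft g (-(2 * k)) * ZMod.dft h k
        = ∑ a : ZMod N, ∑ b : ZMod N, ∑ c : ZMod N,
            f a * g b * h c * ZMod.stdAddChar ((2 * b - a - c) * k) := by
      intro k
      rw [ZMod.dft_apply, ZMod.dft_apply, ZMod.dft_apply, Finset.sum_mul_sum, Finset.sum_mul]
      refine Finset.sum_congr rfl fun a _ => ?_
      rw [Finset.sum_mul_sum]
      refine Finset.sum_congr rfl fun b _ => Finset.sum_congr rfl fun c _ => ?_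
      rw [smul_eq_mul, smul_eq_mul, smul_eq_mul]
      exact hterm a b c k
    calc ∑ k : ZMod N, ZMod.dft f k * ZMod.dft g (-(2 * k)) * ZMod.dft h k
        = ∑ k : ZMod N, ∑ a : ZMod N, ∑ b : ZMod N, ∑ c : ZMod N,
            f a * g b * h c * ZMod.stdAddChar ((2 * b - a - c) * k) :=
          Finset.sum_congr rfl fun k _ => expand k
      _ = ∑ a : ZMod N, ∑ b : ZMod N, ∑ c : ZMod N, ∑ k : ZMod N,
            f a * g b * h c * ZMod.stdAddChar ((2 * b - a - c) * k) := by
          rw [Finset.sum_comm]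
          refine Finset.sum_congr rfl fun a _ => ?_
          rw [Finset.sum_comm]
          refine Finset.sum_congr rfl fun b _ => ?_
          rw [Finset.sum_comm]
      _ = ∑ a : ZMod N, ∑ b : ZMod N, ∑ c : ZMod N,
            f a * g b * h c * (if (2 * b - a - c) = 0 then (N : ℂ) else 0) := by
          simp only [← Finset.mul_sum, char_orth]
      _ = ∑ a : ZMod N, ∑ b : ZMod N, f a * g b * h (2 * b - a) * (N : ℂ) := by
          refine Finset.sum_congr rfl fun a _ => Finset.sum_congr rfl fun b _ => ?_
          rw [Finset.sum_eq_single (2 * b - a)]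
          · rw [if_pos (by ring)]
          · intro c _ hc
            rw [if_neg (fun hh => hc (by linear_combination -hh)), mul_zero]
          · intro hmem; exact absurd (Finset.mem_univ _) hmem
      _ = (N : ℂ) * ∑ x : ZMod N, ∑ r : ZMod N, f x * g (x + r) * h (x + 2 * r) := by
          rw [Finset.mul_sum]
          refine Finset.sum_congr rfl fun a _ => ?_
          rw [Finset.mul_sum]
          refine Fintype.sum_equiv (Equiv.addLeft (-a)) _ _ fun b => ?_
          simp only [Equiv.coe_addLeft]
          rw [show a + (-a + b) = b by ring, show a + 2 * (-a + b) = 2 * b - a by ring]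
          ring
  have hsum : ∑ x ∈ Finset.range N, ∑ r ∈ Finset.range N,
      f x * g ((x : ZMod N) + r) * h ((x : ZMod N) + 2 * r)
      = ∑ x : ZMod N, ∑ r : ZMod N, f x * g (x + r) * h (x + 2 * r) := by
    rw [← sum_range_zmod (fun x => ∑ r : ZMod N, f x * g (x + r) * h (x + 2 * r))]
    refine Finset.sum_congr rfl fun n _ => ?_
    exact sum_range_zmod (fun r => f n * g ((n : ZMod N) + r) * h ((n : ZMod N) + 2 * r))
  rw [lambda3, hsum]
  have hk : ∀ k : ZMod N, ((N : ℂ)⁻¹ * ZMod.dft f k) * ((N : ℂ)⁻¹ * ZMod.dft g (-(2 * k))) *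
      ((N : ℂ)⁻¹ * ZMod.dft h k)
      = ((N : ℂ)⁻¹) ^ 3 * (ZMod.dft f k * ZMod.dft g (-(2 * k)) * ZMod.dft h k) := fun k => by
    ring
  simp only [hk]
  rw [← Finset.mul_sum, key]
  field_simp

end Aux

/-- The cross terms `Λ₃(μ₁, μ₂, μ₁)` and `Λ₃(μ₁, μ₂, μ₂)` of the Fejér decomposition
are `O(N^{-3β/2})`, with constant depending only on `C` and `β`. -/
theorem lambda3_cross_terms_bound (C β : ℝ) (hC : 0 < C)
    (hβ₁ : 2/3 < β) (hβ₂ : β ≤ 1) :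
    ∃ C' : ℝ, 0 < C' ∧
      ∀ (N K : ℕ), Odd N → 0 < N → 1 ≤ K → (K : ℝ) ≤ (N : ℝ) / 4 →
      ∀ μ μ₁ : ZMod N → ℂ,
        (∀ k : ℕ, 1 ≤ k → k ≤ N - 1 →
          ‖zmodFourier N μ k‖ ≤
            C * ((min k (N - k) * N : ℕ) : ℝ) ^ (-β / 2)) →
        (∀ n : ℕ, n ≤ K →
          zmodFourier N μ₁ n = (1 - (n : ℂ) / (K + 1)) * zmodFourier N μ n) →
        (∀ n : ℕ, K < n → n ≤ N - 1 → zmodFourier N μ₁ n = 0) →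
        ‖lambda3 N μ₁ (μ - μ₁) μ₁‖ ≤ C' * (N : ℝ) ^ (-(3 * β) / 2) ∧
        ‖lambda3 N μ₁ (μ - μ₁) (μ - μ₁)‖ ≤
          C' * (N : ℝ) ^ (-(3 * β) / 2) := by
  have hsum : Summable (fun n : ℕ => (n : ℝ) ^ (-(3 * β) / 2)) := by
    rw [Real.summable_nat_rpow]; linarith
  set Z := ∑' n : ℕ, (n : ℝ) ^ (-(3 * β) / 2) with hZdef
  have hZ0 : (0 : ℝ) ≤ Z := tsum_nonneg fun i => Real.rpow_nonneg (Nat.cast_nonneg i) _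
  have hZ1 : (1 : ℝ) ≤ Z := by
    have h := Summable.le_tsum hsum 1 (fun i _ => Real.rpow_nonneg (Nat.cast_nonneg i) _)
    simpa using h
  refine ⟨8 * C ^ 3 * Z, by positivity, ?_⟩
  intro N K hodd hN hK hK4 μ μ₁ hμ h₁ h₂
  haveI : NeZero N := ⟨hN.ne'⟩
  have h4K : 4 * K ≤ N := by
    have : ((4 * K : ℕ) : ℝ) ≤ (N : ℝ) := by push_cast; linarith
    exact_mod_cast this
  have hKN : K ≤ N - 1 := by omega
  -- linearity of zmodFourier
  have hlin : ∀ k : ℤ, zmodFourier N (μ - μ₁) k = zmodFourier N μ k - zmodFourier N μ₁ k := by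
    intro k
    rw [zmodFourier_eq, zmodFourier_eq, zmodFourier_eq, map_sub]
    simp only [Pi.sub_apply]
    ring
  -- bound on μ-hat at v, 1 ≤ v ≤ K
  have hmin1 : ∀ v : ℕ, 1 ≤ v → v ≤ K →
      ‖zmodFourier N μ v‖ ≤ C * ((v : ℝ) * N) ^ (-β / 2) := by
    intro v h1v hvK
    have h := hμ v h1v (le_trans hvK hKN)
    have hm : min v (N - v) = v := by omega
    rw [hm] at h
    rwa [show ((v * N : ℕ) : ℝ) = (v : ℝ) * N by push_cast; ring] at h
  -- bound on μ-hat at N - 2v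
  have hmin2 : ∀ v : ℕ, 1 ≤ v → v ≤ K →
      ‖zmodFourier N μ ((N - 2 * v : ℕ))‖ ≤ C * ((v : ℝ) * N) ^ (-β / 2) := by
    intro v h1v hvK
    have h := hμ (N - 2 * v) (by omega) (by omega)
    have hm : min (N - 2 * v) (N - (N - 2 * v)) = 2 * v := by omega
    rw [hm] at h
    refine h.trans ?_
    rw [show ((2 * v * N : ℕ) : ℝ) = 2 * (v : ℝ) * N by push_cast; ring]
    refine mul_le_mul_of_nonneg_left ?_ hC.le
    apply Real.rpow_le_rpow_of_nonpos
    · positivity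
    · have : (1 : ℝ) ≤ (v : ℝ) := by exact_mod_cast h1v
      have hN' : (0 : ℝ) < (N : ℝ) := by exact_mod_cast hN
      nlinarith
    · linarith
  -- bound on μ₁-hat
  have hb1 : ∀ v : ℕ, 1 ≤ v → v ≤ K →
      ‖zmodFourier N μ₁ v‖ ≤ C * ((v : ℝ) * N) ^ (-β / 2) := by
    intro v h1v hvK
    rw [h₁ v hvK, norm_mul]
    have habs : ‖1 - (v : ℂ) / ((K : ℂ) + 1)‖ ≤ 1 := by
      have heq : (1 - (v : ℂ) / ((K : ℂ) + 1)) = (((1 - (v : ℝ) / ((K : ℝ) + 1)) : ℝ) : ℂ) := by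
        push_cast; ring
      rw [heq, Complex.norm_real, Real.norm_eq_abs, abs_le]
      have h0 : (0 : ℝ) ≤ (v : ℝ) / ((K : ℝ) + 1) := by positivity
      have hle : (v : ℝ) / ((K : ℝ) + 1) ≤ 1 := by
        rw [div_le_one (by positivity)]
        have : (v : ℝ) ≤ (K : ℝ) := by exact_mod_cast hvK
        linarith
      constructor <;> linarith
    calc ‖1 - (v : ℂ) / ((K : ℂ) + 1)‖ * ‖zmodFourier N μ v‖
        ≤ 1 * (C * ((v : ℝ) * N) ^ (-β / 2)) :=
          mul_le_mul habs (hmin1 v h1v hvK) (norm_nonneg _) zero_le_one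
      _ = C * ((v : ℝ) * N) ^ (-β / 2) := one_mul _
  -- bound on (μ - μ₁)-hat
  have hb2 : ∀ v : ℕ, 1 ≤ v → v ≤ K →
      ‖zmodFourier N (μ - μ₁) v‖ ≤ 2 * C * ((v : ℝ) * N) ^ (-β / 2) := by
    intro v h1v hvK
    rw [hlin]
    calc ‖zmodFourier N μ v - zmodFourier N μ₁ v‖
        ≤ ‖zmodFourier N μ v‖ + ‖zmodFourier N μ₁ v‖ := by
          have h := norm_sub_le (zmodFourier N μ (v : ℤ)) (zmodFourier N μ₁ (v : ℤ))
          simpa using h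
      _ ≤ C * ((v : ℝ) * N) ^ (-β / 2) + C * ((v : ℝ) * N) ^ (-β / 2) :=
          add_le_add (hmin1 v h1v hvK) (hb1 v h1v hvK)
      _ = 2 * C * ((v : ℝ) * N) ^ (-β / 2) := by ring
  -- key: relation of the dft factors to zmodFourier at val
  have hval : ∀ (f : ZMod N → ℂ) (k : ZMod N),
      (N : ℂ)⁻¹ * ZMod.dft f k = zmodFourier N f (k.val : ℤ) := by
    intro f k
    rw [zmodFourier_eq, Int.cast_natCast, ZMod.natCast_zmod_val]
  -- the main estimate for lambda3 μ₁ (μ-μ₁) g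
  have mainbound : ∀ g : ZMod N → ℂ,
      (∀ v : ℕ, 1 ≤ v → v ≤ K →
        ‖zmodFourier N g v‖ ≤ 2 * C * ((v : ℝ) * N) ^ (-β / 2)) →
      ‖lambda3 N μ₁ (μ - μ₁) g‖ ≤ 8 * C ^ 3 * Z * (N : ℝ) ^ (-(3 * β) / 2) := by
    intro g hg
    rw [lambda3_spectral]
    refine (norm_sum_le _ _).trans ?_
    have hterm : ∀ k : ZMod N,
        ‖((N : ℂ)⁻¹ * ZMod.dft μ₁ k) * ((N : ℂ)⁻¹ * ZMod.dft (μ - μ₁) (-(2 * k))) *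
          ((N : ℂ)⁻¹ * ZMod.dft g k)‖
        ≤ 8 * C ^ 3 * ((k.val : ℝ)) ^ (-(3 * β) / 2) * (N : ℝ) ^ (-(3 * β) / 2) := by
      intro k
      have hvlt : k.val < N := k.val_lt
      rcases Nat.lt_or_ge K k.val with hKv | hvK
      · -- k.val > K : first factor vanishes
        have hz : zmodFourier N μ₁ (k.val : ℤ) = 0 := h₂ k.val hKv (by omega)
        rw [hval μ₁ k, hz, zero_mul, zero_mul, norm_zero]
        positivity
      · rcases Nat.eq_zero_or_pos k.val with hv0 | hv1
        · -- k.val = 0 : middle factor vanishes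
          have hk0 : k = 0 := (ZMod.val_eq_zero k).1 hv0
          have hmid : zmodFourier N (μ - μ₁) ((0 : ZMod N).val : ℤ) = 0 := by
            rw [hlin]
            have h0 : ((0 : ZMod N).val : ℤ) = ((0 : ℕ) : ℤ) := by
              norm_num [ZMod.val_zero]
            rw [h0, h₁ 0 (Nat.zero_le K)]
            simp
          rw [hk0]
          rw [show -(2 * (0 : ZMod N)) = (0 : ZMod N) by ring]
          rw [hval (μ - μ₁) 0, hmid, mul_zero, zero_mul, norm_zero]
          positivity
        · -- 1 ≤ k.val ≤ K
          set v := k.val with hvdef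
          have h2v : 2 * v ≤ N := by omega
          have hxpos : (0 : ℝ) < (v : ℝ) * N := by
            have h1 : (1 : ℝ) ≤ (v : ℝ) := by exact_mod_cast hv1
            have h2 : (0 : ℝ) < (N : ℝ) := by exact_mod_cast hN
            nlinarith
          have b1 : ‖(N : ℂ)⁻¹ * ZMod.dft μ₁ k‖ ≤
              2 * C * ((v : ℝ) * N) ^ (-β / 2) := by
            rw [hval μ₁ k]
            refine (hb1 v hv1 hvK).trans ?_
            have := Real.rpow_nonneg hxpos.le (-β / 2)
            nlinarith
          have b3 : ‖(N : ℂ)⁻¹ * ZMod.dft g k‖ ≤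
              2 * C * ((v : ℝ) * N) ^ (-β / 2) := by
            rw [hval g k]; exact hg v hv1 hvK
          have b2 : ‖(N : ℂ)⁻¹ * ZMod.dft (μ - μ₁) (-(2 * k))‖ ≤
              2 * C * ((v : ℝ) * N) ^ (-β / 2) := by
            have h2k : -(2 * k) = ((N - 2 * v : ℕ) : ZMod N) := by
              rw [Nat.cast_sub h2v, ZMod.natCast_self, zero_sub, Nat.cast_mul,
                Nat.cast_ofNat, ZMod.natCast_zmod_val]
            have hrew : (N : ℂ)⁻¹ * ZMod.dft (μ - μ₁) (-(2 * k)) =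
                zmodFourier N (μ - μ₁) ((N - 2 * v : ℕ) : ℤ) := by
              rw [zmodFourier_eq, Int.cast_natCast, h2k]
            rw [hrew, hlin, h₂ (N - 2 * v) (by omega) (by omega), sub_zero]
            refine (hmin2 v hv1 hvK).trans ?_
            have := Real.rpow_nonneg hxpos.le (-β / 2)
            nlinarith
          calc ‖((N : ℂ)⁻¹ * ZMod.dft μ₁ k) *
                ((N : ℂ)⁻¹ * ZMod.dft (μ - μ₁) (-(2 * k))) * ((N : ℂ)⁻¹ * ZMod.dft g k)‖
              = ‖(N : ℂ)⁻¹ * ZMod.dft μ₁ k‖ *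
                ‖(N : ℂ)⁻¹ * ZMod.dft (μ - μ₁) (-(2 * k))‖ *
                ‖(N : ℂ)⁻¹ * ZMod.dft g k‖ := by
                rw [norm_mul, norm_mul]
            _ ≤ (2 * C * ((v : ℝ) * N) ^ (-β / 2)) * (2 * C * ((v : ℝ) * N) ^ (-β / 2)) *
                (2 * C * ((v : ℝ) * N) ^ (-β / 2)) := by
                gcongr <;> first | exact norm_nonneg _ | assumption
            _ = 8 * C ^ 3 * (((v : ℝ) * N) ^ (-β / 2) * ((v : ℝ) * N) ^ (-β / 2) *
                ((v : ℝ) * N) ^ (-β / 2)) := by ring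
            _ = 8 * C ^ 3 * ((v : ℝ) * N) ^ (-(3 * β) / 2) := by
                rw [← Real.rpow_add hxpos, ← Real.rpow_add hxpos]
                congr 1
                ring
            _ = 8 * C ^ 3 * ((v : ℝ) ^ (-(3 * β) / 2) * (N : ℝ) ^ (-(3 * β) / 2)) := by
                rw [Real.mul_rpow (Nat.cast_nonneg v) (Nat.cast_nonneg N)]
            _ = 8 * C ^ 3 * ((v : ℝ)) ^ (-(3 * β) / 2) * (N : ℝ) ^ (-(3 * β) / 2) := by ring
    refine (Finset.sum_le_sum (fun k _ => hterm k)).trans ?_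
    have hsum1 : ∑ k : ZMod N, 8 * C ^ 3 * ((k.val : ℝ)) ^ (-(3 * β) / 2) *
        (N : ℝ) ^ (-(3 * β) / 2)
        = 8 * C ^ 3 * (N : ℝ) ^ (-(3 * β) / 2) * ∑ k : ZMod N, ((k.val : ℝ)) ^ (-(3 * β) / 2) := by
      rw [Finset.mul_sum]
      exact Finset.sum_congr rfl fun k _ => by ring
    rw [hsum1]
    have hsum2 : ∑ k : ZMod N, ((k.val : ℝ)) ^ (-(3 * β) / 2) ≤ Z := by
      have heq : ∑ k : ZMod N, ((k.val : ℝ)) ^ (-(3 * β) / 2)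
          = ∑ n ∈ Finset.range N, ((n : ℝ)) ^ (-(3 * β) / 2) := by
        rw [← sum_range_zmod (fun x : ZMod N => ((x.val : ℝ)) ^ (-(3 * β) / 2))]
        exact Finset.sum_congr rfl fun n hn => by
          rw [ZMod.val_natCast_of_lt (Finset.mem_range.1 hn)]
      rw [heq]
      exact Summable.sum_le_tsum (Finset.range N)
        (fun i _ => Real.rpow_nonneg (Nat.cast_nonneg i) _) hsum
    calc 8 * C ^ 3 * (N : ℝ) ^ (-(3 * β) / 2) * ∑ k : ZMod N, ((k.val : ℝ)) ^ (-(3 * β) / 2)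
        ≤ 8 * C ^ 3 * (N : ℝ) ^ (-(3 * β) / 2) * Z := by
          have hnn : (0 : ℝ) ≤ 8 * C ^ 3 * (N : ℝ) ^ (-(3 * β) / 2) := by positivity
          exact mul_le_mul_of_nonneg_left hsum2 hnn
      _ = 8 * C ^ 3 * Z * (N : ℝ) ^ (-(3 * β) / 2) := by ring
  constructor
  · refine mainbound μ₁ fun v h1v hvK => ?_
    refine (hb1 v h1v hvK).trans ?_
    have h1 : (1 : ℝ) ≤ (v : ℝ) := by exact_mod_cast h1v
    have h2 : (0 : ℝ) < (N : ℝ) := by exact_mod_cast hN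
    have := Real.rpow_nonneg (by nlinarith : (0:ℝ) ≤ (v : ℝ) * N) (-β / 2)
    nlinarith
  · exact mainbound (μ - μ₁) hb2
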